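/- Let F be a field and let f ∈ F[x_1,...,x_n] be a nonzero multilinear polynomial with exactly s monomials (s nonzero coefficients). Then every nonzero multiple g·f of f (with g ∈ F[x_1,...,x_n] nonzero) has at least s monomials. -/

import Mathlib

open MvPolynomial

/-- The support card of a multivariate polynomial splits as the sum of the support cards of
the coefficients of `finSuccEquiv` applied to it. -/
lemma card_support_eq_sum_finSuccEquiv {R : Type*} [CommSemiring R] (n : ℕ)
    (p : MvPolynomial (Fin (n + 1)) R) :
    p.support.card =
      ∑ i ∈ (finSuccEquiv R n p).support, ((finSuccEquiv R n p).coeff i).support.card := by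
  classical
  have hsupp : p.support = (finSuccEquiv R n p).support.biUnion
      (fun i => ((finSuccEquiv R n p).coeff i).support.image (Finsupp.cons i)) := by
    ext m
    simp only [Finset.mem_biUnion, Finset.mem_image]
    constructor
    · intro hm
      refine ⟨m 0, ?_, m.tail, ?_, m.cons_tail⟩
      · rw [support_finSuccEquiv]
        exact Finset.mem_image_of_mem _ hm
      · rw [mem_support_coeff_finSuccEquiv, Finsupp.cons_tail]
        exact hm
    · rintro ⟨i, _, m', hm', rfl⟩
      exact mem_support_coeff_finSuccEquiv.1 hm'
  rw [hsupp, Finset.card_biUnion]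
  · refine Finset.sum_congr rfl fun i _ => ?_
    exact Finset.card_image_of_injective _ (Finsupp.cons_right_injective i)
  · intro a _ b _ hab
    simp only [Finset.disjoint_left, Finset.mem_image]
    rintro x ⟨m, _, rfl⟩ ⟨m', _, hm'⟩
    apply hab
    have := congrArg (fun f : Fin (n+1) →₀ ℕ => f 0) hm'
    simpa [Finsupp.cons_zero] using this.symm

/-- Every nonzero multiple of a nonzero multilinear polynomial with `s` monomials has at
least `s` monomials. -/
theorem stmt5 {F : Type*} [Field F] (n : ℕ) (f : MvPolynomial (Fin n) F) (hf : f ≠ 0)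
    (hml : ∀ i : Fin n, MvPolynomial.degreeOf i f ≤ 1) (s : ℕ) (hs : f.support.card = s) :
    ∀ g : MvPolynomial (Fin n) F, g ≠ 0 → s ≤ (g * f).support.card := by
  classical
  induction n generalizing s with
  | zero =>
    intro g hg
    have h1 : f.support.card ≤ 1 := by
      refine Finset.card_le_one.2 fun a _ b _ => ?_
      exact Subsingleton.elim a b
    have h2 : (g * f) ≠ 0 := mul_ne_zero hg hf
    have h3 : (g * f).support.Nonempty := by
      rwa [Finset.nonempty_iff_ne_empty, Ne, support_eq_empty]
    have := Finset.card_pos.2 h3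
    omega
  | succ n ih =>
    intro g hg
    set e := finSuccEquiv F n with he
    have hef : e f ≠ 0 := by
      simpa using (map_ne_zero_iff e e.injective).2 hf
    have heg : e g ≠ 0 := by
      simpa using (map_ne_zero_iff e e.injective).2 hg
    have hdeg : (e f).natDegree ≤ 1 := by
      rw [he, natDegree_finSuccEquiv]; exact hml 0
    -- coefficients of e f are multilinear
    have hcoeff_ml : ∀ i : ℕ, ∀ j : Fin n, degreeOf j ((e f).coeff i) ≤ 1 := fun i j =>
      le_trans (degreeOf_coeff_finSuccEquiv f j i) (hml j.succ)
    have hp : e (g * f) = e g * e f := map_mul e g f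
    have hpne : e g * e f ≠ 0 := mul_ne_zero heg hef
    have hcard : (g * f).support.card =
        ∑ i ∈ (e g * e f).support, ((e g * e f).coeff i).support.card := by
      rw [card_support_eq_sum_finSuccEquiv, ← he, hp]
    have hscard : s = ∑ i ∈ (e f).support, ((e f).coeff i).support.card := by
      rw [← hs, card_support_eq_sum_finSuccEquiv, ← he]
    rw [hcard]
    -- leading coefficient facts
    have hlead : (e g * e f).coeff (e g * e f).natDegree =
        (e g).leadingCoeff * (e f).leadingCoeff := by
      rw [Polynomial.coeff_natDegree, Polynomial.leadingCoeff_mul]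
    have hleadf : (e f).leadingCoeff ≠ 0 := Polynomial.leadingCoeff_ne_zero.2 hef
    have hleadg : (e g).leadingCoeff ≠ 0 := Polynomial.leadingCoeff_ne_zero.2 heg
    have hlead_ml : ∀ j : Fin n, degreeOf j ((e f).leadingCoeff) ≤ 1 := fun j =>
      hcoeff_ml _ j
    have hIH_lead : ((e f).leadingCoeff).support.card ≤
        ((e g * e f).coeff (e g * e f).natDegree).support.card := by
      rw [hlead]
      exact ih (e f).leadingCoeff hleadf hlead_ml _ rfl (e g).leadingCoeff hleadg
    by_cases hsame : (e f).natTrailingDegree = (e f).natDegree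
    · -- f' has a single term in X
      have hsupf : (e f).support = {(e f).natDegree} := by
        apply Finset.eq_singleton_iff_unique_mem.2
        refine ⟨Polynomial.natDegree_mem_support_of_nonzero hef, fun a ha => ?_⟩
        have h1 := Polynomial.le_natDegree_of_mem_supp a ha
        have h2 := Polynomial.natTrailingDegree_le_of_mem_supp a ha
        omega
      have hs' : s = ((e f).leadingCoeff).support.card := by
        rw [hscard, hsupf, Finset.sum_singleton]; rfl
      calc s ≤ ((e g * e f).coeff (e g * e f).natDegree).support.card := by
              rw [hs']; exact hIH_lead
        _ ≤ _ := by
              exact Finset.single_le_sum (f := fun i => ((e g * e f).coeff i).support.card)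
                (fun i _ => Nat.zero_le _)
                (Polynomial.natDegree_mem_support_of_nonzero hpne)
    · -- f' has degree 1 and nonzero constant term
      have htd_le : (e f).natTrailingDegree ≤ (e f).natDegree :=
        Polynomial.natTrailingDegree_le_natDegree _
      have htd0 : (e f).natTrailingDegree = 0 := by omega
      have hd1 : (e f).natDegree = 1 := by omega
      have htrail : (e g * e f).coeff (e g * e f).natTrailingDegree =
          (e g).trailingCoeff * (e f).trailingCoeff := by
        rw [← Polynomial.trailingCoeff, Polynomial.trailingCoeff_mul]
      have htrailf : (e f).trailingCoeff ≠ 0 := by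
        simpa [Polynomial.trailingCoeff_eq_zero] using hef
      have htrailg : (e g).trailingCoeff ≠ 0 := by
        simpa [Polynomial.trailingCoeff_eq_zero] using heg
      have htrail_ml : ∀ j : Fin n, degreeOf j ((e f).trailingCoeff) ≤ 1 := fun j =>
        hcoeff_ml _ j
      have hIH_trail : ((e f).trailingCoeff).support.card ≤
          ((e g * e f).coeff (e g * e f).natTrailingDegree).support.card := by
        rw [htrail]
        exact ih (e f).trailingCoeff htrailf htrail_ml _ rfl (e g).trailingCoeff htrailg
      -- support of e f is exactly {0, 1}
      have hsupf : (e f).support = {0, 1} := by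
        ext a
        simp only [Finset.mem_insert, Finset.mem_singleton]
        constructor
        · intro ha
          have h1 := Polynomial.le_natDegree_of_mem_supp a ha
          omega
        · rintro (rfl | rfl)
          · rw [Polynomial.mem_support_iff]
            simpa [Polynomial.trailingCoeff, htd0] using htrailf
          · rw [Polynomial.mem_support_iff]
            simpa [Polynomial.leadingCoeff, hd1] using hleadf
      have hs' : s = ((e f).trailingCoeff).support.card +
          ((e f).leadingCoeff).support.card := by
        rw [hscard, hsupf, Finset.sum_pair (by norm_num)]
        simp [Polynomial.trailingCoeff, Polynomial.leadingCoeff, htd0, hd1]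
      -- trailing degree of product < degree of product
      have hdp : (e g * e f).natDegree = (e g).natDegree + 1 := by
        rw [Polynomial.natDegree_mul heg hef, hd1]
      have htp : (e g * e f).natTrailingDegree ≤ (e g).natDegree := by
        rw [Polynomial.natTrailingDegree_mul heg hef, htd0, add_zero]
        exact Polynomial.natTrailingDegree_le_natDegree _
      have hne : (e g * e f).natTrailingDegree ≠ (e g * e f).natDegree := by omega
      have hsub : ({(e g * e f).natTrailingDegree, (e g * e f).natDegree} : Finset ℕ)
          ⊆ (e g * e f).support := by
        intro a ha
        simp only [Finset.mem_insert, Finset.mem_singleton] at ha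
        rcases ha with rfl | rfl
        · exact Polynomial.natTrailingDegree_mem_support_of_nonzero hpne
        · exact Polynomial.natDegree_mem_support_of_nonzero hpne
      calc s ≤ ((e g * e f).coeff (e g * e f).natTrailingDegree).support.card +
              ((e g * e f).coeff (e g * e f).natDegree).support.card := by
              rw [hs']; exact Nat.add_le_add hIH_trail hIH_lead
        _ = ∑ i ∈ ({(e g * e f).natTrailingDegree, (e g * e f).natDegree} : Finset ℕ),
              ((e g * e f).coeff i).support.card := by
              rw [Finset.sum_pair hne]
        _ ≤ _ := Finset.sum_le_sum_of_subset hsub
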